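/- Let 0 < m < n < 2m, let Σ be a finite alphabet, and let S ⊆ Σ^m ∪ Σ^n be such that S* is co-finite. Then every word of length l = m·|Σ|^{n−m} + (n−m) belongs to S*, i.e., Σ^l ⊆ S*. -/

import Mathlib

open Computability

private lemma kstar_split {α : Type} {S : Language α} {y : List α} (hy : y ∈ S∗) :
    y = [] ∨ ∃ B z, B ∈ S ∧ z ∈ S∗ ∧ y = B ++ z := by
  rw [Language.mem_kstar] at hy
  obtain ⟨L, rfl, hL⟩ := hy
  cases L with
  | nil => exact Or.inl rfl
  | cons B L' =>
    refine Or.inr ⟨B, L'.flatten, hL _ (by simp),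
      Language.mem_kstar.mpr ⟨L', rfl, fun y hy => hL y (by simp [hy])⟩, by simp⟩

private lemma kstar_append {α : Type} {S : Language α} {x z : List α}
    (hx : x ∈ S∗) (hz : z ∈ S∗) : x ++ z ∈ S∗ := by
  rw [Language.mem_kstar] at hx hz ⊢
  obtain ⟨L1, rfl, h1⟩ := hx
  obtain ⟨L2, rfl, h2⟩ := hz
  refine ⟨L1 ++ L2, by simp, fun y hy => ?_⟩
  rcases List.mem_append.mp hy with h | h
  exacts [h1 y h, h2 y h]

private lemma mem_kstar_of_mem {α : Type} {S : Language α} {x : List α} (hx : x ∈ S) : x ∈ S∗ :=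
  Language.mem_kstar.mpr ⟨[x], by simp, by simp [hx]⟩

private lemma nil_mem_kstar' {α : Type} (S : Language α) : ([] : List α) ∈ S∗ :=
  Language.mem_kstar.mpr ⟨[], rfl, by simp⟩

private lemma all_m_div {α : Type} {S : Language α} {m : ℕ}
    (hall : ∀ v : List α, v.length = m → v ∈ S) :
    ∀ (j : ℕ) (y : List α), y.length = j * m → y ∈ S∗ := by
  intro j
  induction j with
  | zero =>
    intro y hy
    rw [Nat.zero_mul] at hy
    rw [List.length_eq_zero_iff.mp hy]
    exact nil_mem_kstar' S
  | succ j ih =>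
    intro y hy
    have hmy : m ≤ y.length := by rw [hy, Nat.succ_mul]; omega
    have he : y = y.take m ++ y.drop m := (List.take_append_drop m y).symm
    rw [he]
    refine kstar_append (mem_kstar_of_mem (hall _ ?_)) (ih _ ?_)
    · rw [List.length_take]; omega
    · rw [List.length_drop, hy, Nat.succ_mul]; omega

private lemma all_m_mem {α : Type} {S : Language α} {m n N : ℕ}
    (hm : 0 < m) (hmn : m < n) (hn2 : n < 2 * m)
    (hS : ∀ w ∈ S, w.length = m ∨ w.length = n)
    (hN : ∀ y : List α, N ≤ y.length → y ∈ S∗) :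
    ∀ v : List α, v.length = m → v ∈ S := by
  intro v hv
  by_contra hvS
  obtain ⟨c, v', rfl⟩ : ∃ c v', v = c :: v' := by
    cases v with
    | nil => simp at hv; omega
    | cons c v' => exact ⟨c, v', rfl⟩
  set k := n - m with hk
  set u : List α := List.replicate k c with hu
  have hulen : u.length = k := List.length_replicate
  have hvulen : ((c :: v') ++ u).length = n := by
    rw [List.length_append, hv, hulen]; omega
  have hvu : (c :: v') ++ u ∈ S := by
    have hy : ((c :: v') ++ u) ++ List.replicate N c ∈ S∗ := by
      apply hN; rw [List.length_append, hvulen, List.length_replicate]; omega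
    rcases kstar_split hy with h | ⟨B, z, hB, hz, heq⟩
    · simp at h
    · rcases hS B hB with hBm | hBn
      · rw [List.append_assoc] at heq
        obtain ⟨h1, -⟩ := List.append_inj heq.symm (by rw [hBm, hv])
        exact absurd (h1 ▸ hB) hvS
      · obtain ⟨h1, -⟩ := List.append_inj heq.symm (by rw [hBn, hvulen])
        rwa [h1] at hB
  have hfam : ∀ t : ℕ, (List.replicate t ((c :: v') ++ u)).flatten ++ (c :: v') ∉ S∗ := by
    intro t
    induction t with
    | zero =>
      intro hmem
      simp only [List.replicate_zero, List.flatten_nil, List.nil_append] at hmem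
      rcases kstar_split hmem with h | ⟨B, z, hB, hz, heq⟩
      · simp at h
      · have hlen := congrArg List.length heq
        rw [hv, List.length_append] at hlen
        rcases hS B hB with hBm | hBn
        · have hz0 : z = [] := List.length_eq_zero_iff.mp (by omega)
          rw [hz0, List.append_nil] at heq
          exact hvS (by rw [heq]; exact hB)
        · omega
    | succ t ih =>
      intro hmem
      rw [List.replicate_succ, List.flatten_cons, List.append_assoc] at hmem
      rcases kstar_split hmem with h | ⟨B, z, hB, hz, heq⟩
      · simp at h
      · rcases hS B hB with hBm | hBn
        · rw [List.append_assoc] at heq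
          obtain ⟨h1, -⟩ := List.append_inj heq.symm (by rw [hBm, hv])
          exact absurd (h1 ▸ hB) hvS
        · obtain ⟨h1, h2⟩ := List.append_inj heq.symm (by rw [hBn, hvulen])
          exact ih (h2 ▸ hz)
  apply hfam N
  apply hN
  rw [List.length_append, List.length_flatten, List.map_replicate, hvulen,
    List.sum_replicate, smul_eq_mul]
  have h5 : N ≤ N * n := Nat.le_mul_of_pos_right N (by omega)
  omega

/-- If `0 < m < n < 2m`, `S ⊆ Σ^m ∪ Σ^n`, and `S∗` is co-finite, then every
word of length `l = m·|Σ|^{n−m} + (n−m)` belongs to `S∗`. -/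
theorem full_length_l_of_cofinite {α : Type} [Fintype α] (m n : ℕ)
    (hm : 0 < m) (hmn : m < n) (hn2m : n < 2 * m)
    (S : Language α) (hS : ∀ w ∈ S, w.length = m ∨ w.length = n)
    (hcof : Set.Finite ((S∗ : Language α)ᶜ)) :
    ∀ w : List α, w.length = m * Fintype.card α ^ (n - m) + (n - m) → w ∈ S∗ := by
  intro w hw
  set k := n - m with hk
  have hk1 : 0 < k := by omega
  have hkm : k < m := by omega
  have hnmk : n = m + k := by omega
  set Q := Fintype.card α ^ k with hQ
  obtain ⟨N, hN⟩ : ∃ N, ∀ y : List α, N ≤ y.length → y ∈ S∗ := by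
    refine ⟨hcof.toFinset.sup List.length + 1, fun y hy => ?_⟩
    by_contra hns
    have hmem : y ∈ hcof.toFinset := hcof.mem_toFinset.mpr hns
    have := Finset.le_sup (f := List.length) hmem
    omega
  have mS : ∀ v : List α, v.length = m → v ∈ S := all_m_mem hm hmn hn2m hS hN
  obtain ⟨i, j, hij, hjQ, hwin⟩ :
      ∃ i j, i < j ∧ j ≤ Q ∧ (w.drop (i*m)).take k = (w.drop (j*m)).take k := by
    have hwne : w ≠ [] := by
      intro h; rw [h] at hw; simp at hw; omega
    have hα : Nonempty α := ⟨w.head hwne⟩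
    have hcpos : 0 < Fintype.card α := Fintype.card_pos_iff.mpr hα
    have hmQ : m * Q = Q * m := Nat.mul_comm _ _
    have hlen : ∀ h : Fin (Q+1), ((w.drop ((h:ℕ)*m)).take k).length = k := by
      intro h
      have h1 : (h:ℕ) ≤ Q := Nat.lt_succ_iff.mp h.isLt
      have h2 : (h:ℕ)*m ≤ Q*m := Nat.mul_le_mul_right m h1
      rw [List.length_take, List.length_drop, hw]
      omega
    have hcard : Fintype.card (List.Vector α k) < Fintype.card (Fin (Q+1)) := by
      rw [card_vector, Fintype.card_fin, ← hQ]
      omega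
    let f : Fin (Q+1) → List.Vector α k := fun h => ⟨(w.drop ((h:ℕ)*m)).take k, hlen h⟩
    obtain ⟨x, y, hxy, hf⟩ := Fintype.exists_ne_map_eq_of_card_lt f hcard
    have hval : (w.drop ((x:ℕ)*m)).take k = (w.drop ((y:ℕ)*m)).take k :=
      congrArg List.Vector.toList hf

    rcases Nat.lt_or_ge (x:ℕ) (y:ℕ) with hlt | hge
    · exact ⟨x, y, hlt, Nat.lt_succ_iff.mp y.isLt, hval⟩
    · rcases Nat.lt_or_ge (y:ℕ) (x:ℕ) with hlt' | hge'
      · exact ⟨y, x, hlt', Nat.lt_succ_iff.mp x.isLt, hval.symm⟩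
      · exact absurd (Fin.val_injective (le_antisymm hge' hge)) hxy
  by_cases hgood : ∃ h, h < Q ∧ (w.drop (h*m)).take n ∈ S
  · obtain ⟨h, hhQ, hB⟩ := hgood
    have hmQ : m * Q = Q * m := Nat.mul_comm _ _
    have hQm : h*m + m ≤ Q*m := by
      have h6 := Nat.mul_le_mul_right m (Nat.succ_le_of_lt hhQ)
      rw [Nat.succ_mul] at h6; omega
    have e1 : w = w.take (h*m) ++ ((w.drop (h*m)).take n ++ w.drop (h*m + n)) := by
      rw [← List.drop_drop]
      rw [List.take_append_drop, List.take_append_drop]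
    rw [e1]
    refine kstar_append ?_ (kstar_append (mem_kstar_of_mem hB) ?_)
    · refine all_m_div mS h _ ?_
      have h7 : h*m ≤ w.length := by rw [hw]; omega
      rw [List.length_take, Nat.min_eq_left h7]
    · refine all_m_div mS (Q - (h+1)) _ ?_
      rw [List.length_drop, hw]
      have hexp : (Q - (h+1)) * m = Q*m - (h+1)*m := by rw [Nat.sub_mul]
      have h4 : (h+1)*m = h*m + m := by rw [Nat.succ_mul]
      omega
  · push_neg at hgood
    exfalso
    set d := j - i with hd
    have hd1 : 1 ≤ d := by omega
    have hji : i + d = j := by omega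
    have hidm : i*m + d*m = j*m := by rw [← hji, Nat.add_mul]
    have hjm : j*m + k ≤ w.length := by
      rw [hw]
      have h8 := Nat.mul_le_mul_right m hjQ
      have hmQ : m * Q = Q * m := Nat.mul_comm _ _
      omega
    set X := w.drop (i*m) with hX
    have hXlen : X.length = w.length - i*m := List.length_drop
    have him : i*m + (d*m + k) ≤ w.length := by omega
    set M := X.take (d*m) with hM
    set u : List α := X.take k with hu
    have hMlen : M.length = d*m := by
      rw [hM, List.length_take, hXlen]
      omega
    have hkdm : k ≤ d*m := by
      have h9 : m ≤ d*m := Nat.le_mul_of_pos_left m hd1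
      omega
    have hulen : u.length = k := by
      rw [hu, List.length_take, hXlen]
      omega
    have hMu : M ++ u = X.take (d*m + k) := by
      rw [List.take_add]
      congr 1
      rw [hX, List.drop_drop, hidm]
      exact hwin
    have htakekM : M.take k = u := by
      rw [hM, List.take_take, inf_eq_left.mpr hkdm]
    set Zt : ℕ → List α := fun t => (List.replicate t M).flatten ++ u with hZt
    have hZlen : ∀ t, (Zt t).length = t*(d*m) + k := by
      intro t
      simp only [hZt]
      rw [List.length_append, List.length_flatten, List.map_replicate, hMlen,
        List.sum_replicate, smul_eq_mul, hulen]
    have hZsucc : ∀ t, Zt (t+1) = M ++ Zt t := by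
      intro t
      simp only [hZt]
      rw [List.replicate_succ, List.flatten_cons, List.append_assoc]
    have htailk : ∀ t, (Zt t).take k = u := by
      intro t
      cases t with
      | zero =>
        simp only [hZt]
        rw [List.replicate_zero, List.flatten_nil, List.nil_append]
        rw [← hulen]
        exact List.take_length
      | succ t =>
        rw [hZsucc, List.take_append_of_le_length (by rw [hMlen]; exact hkdm), htakekM]
    have htakeZ : ∀ t, (Zt (t+1)).take (d*m + k) = M ++ u := by
      intro t
      rw [hZsucc, List.take_add, List.take_left' hMlen, List.drop_left' hMlen, htailk]
    have kb : ∀ s r, r < d → ((Zt (s+1)).drop (r*m)).take n = (w.drop ((i+r)*m)).take n := by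
      intro s r hr
      have hrm : r*m + n ≤ d*m + k := by
        have h1 : (r+1)*m ≤ d*m := Nat.mul_le_mul_right m (by omega)
        have h2 : (r+1)*m = r*m + m := by rw [Nat.succ_mul]
        omega
      have e1 : (Zt (s+1)).take (d*m+k) = X.take (d*m+k) := by rw [htakeZ, hMu]
      have e2 := congrArg (List.take (r*m + n)) e1
      rw [List.take_take, List.take_take, inf_eq_left.mpr hrm] at e2
      have e3 := congrArg (List.drop (r*m)) e2
      rw [List.drop_take, List.drop_take,
        show r*m + n - r*m = n from by omega] at e3
      rw [e3, hX, List.drop_drop, show i*m + r*m = (i+r)*m from (Nat.add_mul i r m).symm]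
    have key : ∀ g t r, t*d + (d - r) ≤ g → r < d → r ≤ t*d → (Zt t).drop (r*m) ∉ S∗ := by
      intro g
      induction g using Nat.strong_induction_on with
      | _ g IH =>
        intro t r hg hrd hrtd hmem
        have hslen : ((Zt t).drop (r*m)).length = (t*d - r)*m + k := by
          rw [List.length_drop, hZlen]
          have e1 : t*(d*m) = (t*d)*m := by rw [Nat.mul_assoc]
          have e2 : (t*d - r)*m = (t*d)*m - r*m := by rw [Nat.sub_mul]
          have e3 : r*m ≤ (t*d)*m := Nat.mul_le_mul_right m hrtd
          omega
        rcases kstar_split hmem with hnil | ⟨B, z, hB, hz, heq⟩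
        · rw [hnil] at hslen
          simp at hslen
          omega
        · have hlen2 : (t*d - r)*m + k = B.length + z.length := by
            rw [← hslen, heq, List.length_append]
          rcases hS B hB with hBm | hBn
          · have htdr : r + 1 ≤ t*d := by
              by_contra hcon
              have he0 : t*d = r := by omega
              rw [he0, Nat.sub_self, Nat.zero_mul, Nat.zero_add] at hlen2
              omega
            have hz' : z = (Zt t).drop ((r+1)*m) := by
              have hzd : z = ((Zt t).drop (r*m)).drop B.length := by
                rw [heq, List.drop_left]
              rw [hzd, hBm, List.drop_drop, show r*m + m = (r+1)*m from (Nat.succ_mul r m).symm]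
            rcases Nat.lt_or_ge (r+1) d with hcase | hcase
            · exact IH (t*d + (d - (r+1))) (by omega) t (r+1) le_rfl hcase htdr (hz' ▸ hz)
            · have hrd1 : d = r + 1 := by omega
              obtain ⟨s, rfl⟩ : ∃ s, t = s + 1 := by
                cases t with
                | zero => rw [Nat.zero_mul] at htdr; omega
                | succ s => exact ⟨s, rfl⟩
              rw [← hrd1, hZsucc, List.drop_left' hMlen] at hz'
              refine IH (s*d + d) ?_ s 0 ?_ (by omega) (Nat.zero_le _) ?_
              · have h10 : (s+1)*d = s*d + d := by rw [Nat.succ_mul]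
                omega
              · omega
              · rw [Nat.zero_mul, List.drop_zero, ← hz']
                exact hz
          · have htdr : r + 1 ≤ t*d := by
              by_contra hcon
              have he0 : t*d = r := by omega
              rw [he0, Nat.sub_self, Nat.zero_mul, Nat.zero_add] at hlen2
              omega
            obtain ⟨s, rfl⟩ : ∃ s, t = s + 1 := by
              cases t with
              | zero => rw [Nat.zero_mul] at htdr; omega
              | succ s => exact ⟨s, rfl⟩
            have hBeq := congrArg (List.take B.length) heq
            rw [List.take_left, hBn] at hBeq
            rw [kb s r hrd] at hBeq
            exact hgood (i+r) (by omega) (hBeq ▸ hB)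
    have hfin := key (N*d + d) N 0 (by omega) (by omega) (Nat.zero_le _)
    apply hfin
    rw [Nat.zero_mul, List.drop_zero]
    apply hN
    rw [hZlen]
    have h11 : 0 < d*m := Nat.mul_pos hd1 hm
    have h12 : N ≤ N*(d*m) := Nat.le_mul_of_pos_right N h11
    omega
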